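/- Assume the spectral locus is convex. Then for all 0 ≤ a < b ≤ 1, conv(η([a,b])) ∩ conv(η([b,1] ∪ [0,a])) = [η(a), η(b)], where [η(a), η(b)] denotes the line segment joining η(a) and η(b) in ℝ³. -/

import Mathlib

open MeasureTheory Set Real

noncomputable section

abbrev E3 := EuclideanSpace ℝ (Fin 3)

/-- The affine hyperplane `A = {x ∈ ℝ³ : x₁ + x₂ + x₃ = 1}`. -/
def planeA : Set E3 := {x | x 0 + x 1 + x 2 = 1}

/-- The standard 2-simplex `Δ²`. -/
def simplex2 : Set E3 := {x | (∀ i, 0 ≤ x i) ∧ x 0 + x 1 + x 2 = 1}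

/-- Interior relative to the affine hyperplane `A` (for subsets of `A`). -/
def intA (s : Set E3) : Set E3 :=
  {x | x ∈ planeA ∧ ∃ U : Set E3, IsOpen U ∧ x ∈ U ∧ U ∩ planeA ⊆ s}

/-- Closure relative to the affine hyperplane `A` (for subsets of `A`). -/
def closA (s : Set E3) : Set E3 :=
  {x | x ∈ planeA ∧ ∀ U : Set E3, IsOpen U → x ∈ U → (U ∩ planeA ∩ s).Nonempty}

/-- Boundary relative to the affine hyperplane `A` (for subsets of `A`). -/
def frontA (s : Set E3) : Set E3 := closA s \ intA s

/-- The color triangle `T = conv(η([0,1]))`. -/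
def colorTri (η : ℝ → E3) : Set E3 := convexHull ℝ (η '' Icc 0 1)

/-- The cyclic interval `[a,b]_𝕋 ⊆ [0,1]`. -/
def cycIcc (a b : ℝ) : Set ℝ := if a ≤ b then Icc a b else Icc a 1 ∪ Icc 0 b

/-- The color of a spectral density `f` w.r.t. the reference measure `mu`:
`c(f) = ∫_{[0,1]} f(λ) • η(λ) dμ̃(λ)`. -/
def colorOf (mu : Measure ℝ) (η : ℝ → E3) (f : ℝ → ℝ) : E3 :=
  ∫ lam in Icc (0:ℝ) 1, f lam • η lam ∂mu

/-- The spectral locus is convex: `η([0,1]) ⊆ ∂T` and from each interior point of `T` the locus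
is seen under a continuous monotone angle `θ_c` with total variation at most `2π`, where the
angle is measured in the fixed orthonormal frame `(u, v)` of the direction plane of `A`. -/
def IsConvexLocus (η : ℝ → E3) (u v : E3) : Prop :=
  η '' Icc 0 1 ⊆ frontA (colorTri η) ∧
  ∀ c ∈ intA (colorTri η), ∃ θ : ℝ → ℝ,
    ContinuousOn θ (Icc 0 1) ∧
    (MonotoneOn θ (Icc 0 1) ∨ AntitoneOn θ (Icc 0 1)) ∧
    |θ 1 - θ 0| ≤ 2 * π ∧
    ∀ lam ∈ Icc (0:ℝ) 1,
      η lam - c = ‖η lam - c‖ • (Real.cos (θ lam) • u + Real.sin (θ lam) • v)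

/-- The spectral locus is strictly convex: convex, and moreover `η(λ)` does not lie on the chord
`[η(a), η(b)]` for pairwise distinct `a, b, λ ∈ [0,1]`. -/
def IsStrictConvexLocus (η : ℝ → E3) (u v : E3) : Prop :=
  IsConvexLocus η u v ∧
  ∀ a ∈ Icc (0:ℝ) 1, ∀ b ∈ Icc (0:ℝ) 1, ∀ lam ∈ Icc (0:ℝ) 1,
    a ≠ b → b ≠ lam → a ≠ lam → η lam ∉ segment ℝ (η a) (η b)

namespace SpecAux


def ce (θ : ℝ) : ℂ := Complex.exp (θ * Complex.I)
def det2 (z w : ℂ) : ℝ := z.re * w.im - z.im * w.re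
lemma abs_ce (θ : ℝ) : ‖ce θ‖ = 1 := Complex.norm_exp_ofReal_mul_I θ
lemma ce_per (θ : ℝ) : ce (θ + 2*π) = ce θ := by
  have := Complex.exp_mul_I_periodic θ
  simpa [ce, Complex.ofReal_add, add_mul, Complex.ofReal_mul, Complex.ofReal_ofNat] using this
lemma det2_formula (x y α β : ℝ) : det2 ((x:ℂ) * ce α) ((y:ℂ) * ce β) = x * y * Real.sin (β - α) := by
  simp [det2, Complex.mul_re, Complex.mul_im, ce, Complex.exp_ofReal_mul_I_re,
    Complex.exp_ofReal_mul_I_im, Real.sin_sub]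
  ring
lemma det2_add_right (z w₁ w₂ : ℂ) : det2 z (w₁ + w₂) = det2 z w₁ + det2 z w₂ := by
  simp [det2]; ring
lemma det2_sub_right (z w₁ w₂ : ℂ) : det2 z (w₁ - w₂) = det2 z w₁ - det2 z w₂ := by
  simp [det2]; ring
lemma det2_smul_right (z w : ℂ) (r : ℝ) : det2 z (r • w) = r * det2 z w := by
  simp [det2, Complex.smul_re, Complex.smul_im]; ring
lemma det2_add_left (z₁ z₂ w : ℂ) : det2 (z₁ + z₂) w = det2 z₁ w + det2 z₂ w := by
  simp [det2]; ring
lemma det2_sub_left (z₁ z₂ w : ℂ) : det2 (z₁ - z₂) w = det2 z₁ w - det2 z₂ w := by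
  simp [det2]; ring
lemma det2_smul_left (z w : ℂ) (r : ℝ) : det2 (r • z) w = r * det2 z w := by
  simp [det2, Complex.smul_re, Complex.smul_im]; ring
lemma det2_self (z : ℂ) : det2 z z = 0 := by simp [det2]; ring
lemma det2_swap (z w : ℂ) : det2 z w = - det2 w z := by simp [det2]; ring

lemma eq_real_mul_of_det2_eq_zero {w y : ℂ} (hw : ‖w‖ = 1) (h : det2 w y = 0) :
    y = ((starRingEnd ℂ w * y).re : ℝ) * w := by
  have h1 : starRingEnd ℂ w * y = ((starRingEnd ℂ w * y).re : ℝ) := by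
    apply Complex.ext
    · simp
    · simp [Complex.mul_im, det2] at h ⊢; linarith
  have h2 : w * (starRingEnd ℂ w * y) = y := by
    rw [← mul_assoc, Complex.mul_conj, Complex.normSq_eq_norm_sq, hw]
    simp
  calc y = w * (starRingEnd ℂ w * y) := h2.symm
    _ = w * ((starRingEnd ℂ w * y).re : ℝ) := congrArg (fun t => w * t) h1
    _ = ((starRingEnd ℂ w * y).re : ℝ) * w := by ring

lemma collinear_of_det2 {u w : ℂ} (hu : u ≠ 0) (h : det2 u w = 0) : ∃ t : ℝ, w = t • u := by
  refine ⟨(u.re * w.re + u.im * w.im)/(u.re^2 + u.im^2), ?_⟩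
  have hden : u.re^2 + u.im^2 ≠ 0 := by
    have h2 := Complex.normSq_pos.mpr hu
    rw [Complex.normSq_apply] at h2
    nlinarith
  rw [det2] at h
  apply Complex.ext
  · rw [Complex.smul_re, smul_eq_mul, div_mul_eq_mul_div, eq_div_iff hden]
    linear_combination (-u.im) * h
  · rw [Complex.smul_im, smul_eq_mul, div_mul_eq_mul_div, eq_div_iff hden]
    linear_combination u.re * h

def lfun (P Q z : ℂ) : ℝ := det2 (Q - P) z + det2 P Q

lemma lfun_combo (P Q : ℂ) {s t : ℝ} (hst : s + t = 1) : lfun P Q (s • P + t • Q) = 0 := by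
  have hs : s = 1 - t := by linarith
  subst hs
  simp only [lfun, det2_add_right, det2_smul_right, det2_sub_left, det2_self, det2_swap Q P]
  ring

lemma lfun_ray (P Q : ℂ) (x φ : ℝ) :
    lfun P Q ((x:ℂ) * ce φ) = x * det2 (Q - P) (ce φ) + det2 P Q := by
  rw [lfun, ← Complex.real_smul, det2_smul_right]

lemma crossing {p q α β : ℝ} (hp : 0 < p) (hq : 0 < q) (hαβ : α < β) (hpi : β < α + π)
    {φ : ℝ} (hφ1 : α ≤ φ) (hφ2 : φ ≤ β) :
    ∃ t c : ℝ, 0 ≤ t ∧ t ≤ 1 ∧ 0 < c ∧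
      (1 - t) • ((p:ℂ) * ce α) + t • ((q:ℂ) * ce β) = (c:ℂ) * ce φ := by
  have hsa : 0 ≤ Real.sin (φ - α) := sin_nonneg_of_nonneg_of_le_pi (by linarith) (by linarith)
  have hsb : 0 ≤ Real.sin (β - φ) := sin_nonneg_of_nonneg_of_le_pi (by linarith) (by linarith)
  have hsd : 0 < Real.sin (β - α) := sin_pos_of_pos_of_lt_pi (by linarith) (by linarith)
  set g0 : ℝ := - (p * Real.sin (φ - α)) with hg0def
  set g1 : ℝ := q * Real.sin (β - φ) with hg1def
  have hg0 : g0 ≤ 0 := by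
    have := mul_nonneg hp.le hsa; simp [hg0def]; linarith
  have hg1 : 0 ≤ g1 := mul_nonneg hq.le hsb
  obtain ⟨t, ht0, ht1, hgt⟩ : ∃ t, 0 ≤ t ∧ t ≤ 1 ∧ (1-t) * g0 + t * g1 = 0 := by
    rcases eq_or_lt_of_le hg0 with h|h
    · exact ⟨0, le_refl _, zero_le_one, by simpa using h⟩
    · have hd : g0 - g1 < 0 := by linarith
      refine ⟨g0 / (g0 - g1), ?_, ?_, ?_⟩
      · rw [div_nonneg_iff]; right; exact ⟨h.le, hd.le⟩
      · rw [div_le_one_of_neg hd]; linarith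
      · have hne : g0 - g1 ≠ 0 := ne_of_lt hd
        field_simp
        ring
  set P : ℂ := (p:ℂ) * ce α with hP
  set Q : ℂ := (q:ℂ) * ce β with hQ
  set y : ℂ := (1 - t) • P + t • Q with hy
  have hdy : det2 (ce φ) y = 0 := by
    rw [hy, det2_add_right, det2_smul_right, det2_smul_right, hP, hQ]
    have e1 : det2 (ce φ) ((p:ℂ) * ce α) = p * Real.sin (α - φ) := by
      have := det2_formula 1 p φ α; simpa using this
    have e2 : det2 (ce φ) ((q:ℂ) * ce β) = q * Real.sin (β - φ) := by
      have := det2_formula 1 q φ β; simpa using this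
    rw [e1, e2]
    have hneg : Real.sin (α - φ) = - Real.sin (φ - α) := by
      rw [← Real.sin_neg]; ring_nf
    rw [hneg]; linear_combination hgt
  set c : ℝ := ((starRingEnd ℂ (ce φ)) * y).re with hc
  have hyc : y = (c:ℂ) * ce φ := eq_real_mul_of_det2_eq_zero (abs_ce φ) hdy
  have way1 : det2 (ce α) y = t * (q * Real.sin (β - α)) := by
    rw [hy, det2_add_right, det2_smul_right, det2_smul_right, hP, hQ]
    have e1 : det2 (ce α) ((p:ℂ) * ce α) = 0 := by
      have := det2_formula 1 p α α; simpa using this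
    have e2 : det2 (ce α) ((q:ℂ) * ce β) = q * Real.sin (β - α) := by
      have := det2_formula 1 q α β; simpa using this
    rw [e1, e2]; ring
  have way1' : det2 (ce α) y = c * Real.sin (φ - α) := by
    rw [hyc]
    have := det2_formula 1 c α φ; simpa using this
  have way2 : det2 y (ce β) = (1 - t) * (p * Real.sin (β - α)) := by
    rw [hy, det2_add_left, det2_smul_left, det2_smul_left, hP, hQ]
    have e1 : det2 ((p:ℂ) * ce α) (ce β) = p * Real.sin (β - α) := by
      have := det2_formula p 1 α β; simpa using this
    have e2 : det2 ((q:ℂ) * ce β) (ce β) = 0 := by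
      have := det2_formula q 1 β β; simpa using this
    rw [e1, e2]; ring
  have way2' : det2 y (ce β) = c * Real.sin (β - φ) := by
    rw [hyc]
    have := det2_formula c 1 φ β; simpa using this
  have hcpos : 0 < c := by
    rcases lt_trichotomy c 0 with h|h|h
    · exfalso
      have h1 : Real.sin (φ - α) = 0 := by
        rcases eq_or_lt_of_le hsa with hh|hh
        · exact hh.symm
        · exfalso
          have hl : c * Real.sin (φ - α) < 0 := mul_neg_of_neg_of_pos h hh
          have hr : 0 ≤ t * (q * Real.sin (β - α)) :=
            mul_nonneg ht0 (mul_nonneg hq.le hsd.le)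
          rw [way1'] at way1; linarith [way1 ▸ hr]
      have h2 : Real.sin (β - φ) = 0 := by
        rcases eq_or_lt_of_le hsb with hh|hh
        · exact hh.symm
        · exfalso
          have hl : c * Real.sin (β - φ) < 0 := mul_neg_of_neg_of_pos h hh
          have hr : 0 ≤ (1 - t) * (p * Real.sin (β - α)) :=
            mul_nonneg (by linarith) (mul_nonneg hp.le hsd.le)
          rw [way2'] at way2; linarith [way2 ▸ hr]
      have hφα : φ - α = 0 := by
        have := (Real.sin_eq_zero_iff_of_lt_of_lt (x := φ - α) (by linarith) (by linarith)).mp h1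
        exact this
      have hβφ : β - φ = 0 := by
        have := (Real.sin_eq_zero_iff_of_lt_of_lt (x := β - φ) (by linarith) (by linarith)).mp h2
        exact this
      linarith
    · exfalso
      have hy0 : y = 0 := by rw [hyc, h]; simp
      have ht0' : t = 0 := by
        have hz : (0:ℝ) = t * (q * Real.sin (β - α)) := by
          rw [← way1, hy0]; simp [det2]
        nlinarith [mul_pos hq hsd]
      have : P = (0:ℂ) := by
        have := hy
        rw [hy0, ht0'] at this
        simpa using this.symm
      have habs : ‖P‖ = p := by
        rw [hP, norm_mul, abs_ce, Complex.norm_real, Real.norm_eq_abs, abs_of_pos hp, mul_one]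
      rw [this] at habs; simp at habs; linarith
    · exact h
  exact ⟨t, c, ht0, ht1, hcpos, hyc⟩


section ConvexBits
variable {T : Set ℂ}

lemma smul_mem_interior (hT : Convex ℝ T) (h0 : (0:ℂ) ∈ interior T) {X : ℂ} (hX : X ∈ T)
    {s : ℝ} (hs0 : 0 < s) (hs1 : s < 1) : s • X ∈ interior T := by
  apply hT.openSegment_interior_closure_subset_interior h0 (subset_closure hX)
  exact ⟨1 - s, s, by linarith, hs0, by ring, by simp⟩

lemma G1 (hT : Convex ℝ T) (h0 : (0:ℂ) ∈ interior T) {p q α β : ℝ}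
    (hp : 0 < p) (hq : 0 < q) (hαβ : α < β) (hpi : β < α + π)
    (hP : (p:ℂ) * ce α ∈ T) (hQ : (q:ℂ) * ce β ∈ T)
    {φ x : ℝ} (hx : 0 < x) (hφ1 : α ≤ φ) (hφ2 : φ ≤ β)
    (hX : (x:ℂ) * ce φ ∈ T) (hXb : (x:ℂ) * ce φ ∉ interior T) :
    lfun ((p:ℂ) * ce α) ((q:ℂ) * ce β) ((x:ℂ) * ce φ) ≤ 0 ∧
    (lfun ((p:ℂ) * ce α) ((q:ℂ) * ce β) ((x:ℂ) * ce φ) = 0 →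
      (x:ℂ) * ce φ ∈ segment ℝ ((p:ℂ) * ce α) ((q:ℂ) * ce β)) := by
  obtain ⟨t, c, ht0, ht1, hc, hy⟩ := crossing hp hq hαβ hpi hφ1 hφ2
  set P : ℂ := (p:ℂ) * ce α with hPdef
  set Q : ℂ := (q:ℂ) * ce β with hQdef
  have hdpos : 0 < det2 P Q := by
    rw [hPdef, hQdef, det2_formula]
    exact mul_pos (mul_pos hp hq) (sin_pos_of_pos_of_lt_pi (by linarith) (by linarith))
  set d : ℝ := det2 P Q with hd
  set A : ℝ := det2 (Q - P) (ce φ) with hA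
  have hyA : c * A + d = 0 := by
    have h1 : lfun P Q ((1-t) • P + t • Q) = 0 := lfun_combo P Q (by ring)
    rw [hy, lfun_ray] at h1
    exact h1
  have hAneg : A < 0 := by nlinarith
  have hclex : c ≤ x := by
    by_contra hlt; push_neg at hlt
    have hyT : (c:ℂ) * ce φ ∈ T := by
      rw [← hy]; exact hT hP hQ (by linarith) (by linarith) (by ring)
    have hmem : ((x/c) : ℝ) • ((c:ℂ) * ce φ) ∈ interior T :=
      smul_mem_interior hT h0 hyT (by positivity) (by rw [div_lt_one hc]; exact hlt)
    have hXe : ((x/c):ℝ) • ((c:ℂ) * ce φ) = (x:ℂ) * ce φ := by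
      have hcne : (c:ℂ) ≠ 0 := by exact_mod_cast hc.ne'
      rw [Complex.real_smul]; push_cast; field_simp
    exact hXb (hXe ▸ hmem)
  constructor
  · rw [lfun_ray, ← hA, ← hd]; nlinarith
  · intro h0l
    rw [lfun_ray, ← hA, ← hd] at h0l
    have hxc : x = c := by nlinarith
    refine ⟨1 - t, t, by linarith, ht0, by ring, ?_⟩
    rw [hy, hxc]

lemma G2 (hT : Convex ℝ T) (h0 : (0:ℂ) ∈ interior T) {p q α β : ℝ}
    (hp : 0 < p) (hq : 0 < q) (hαβ : α < β) (hpi : β < α + π)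
    (hP : (p:ℂ) * ce α ∈ T) (hQ : (q:ℂ) * ce β ∈ T)
    (hPb : (p:ℂ) * ce α ∉ interior T) (hQb : (q:ℂ) * ce β ∉ interior T)
    {φ x : ℝ} (hx : 0 < x) (hφ1 : β ≤ φ) (hφ2 : φ ≤ α + 2*π)
    (hX : (x:ℂ) * ce φ ∈ T) :
    0 ≤ lfun ((p:ℂ) * ce α) ((q:ℂ) * ce β) ((x:ℂ) * ce φ) := by
  by_contra hneg; push_neg at hneg
  set P : ℂ := (p:ℂ) * ce α with hPdef
  set Q : ℂ := (q:ℂ) * ce β with hQdef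
  have hdpos : 0 < det2 P Q := by
    rw [hPdef, hQdef, det2_formula]
    exact mul_pos (mul_pos hp hq) (sin_pos_of_pos_of_lt_pi (by linarith) (by linarith))
  set d : ℝ := det2 P Q with hd
  set A : ℝ := det2 (Q - P) (ce φ) with hA
  have hlX : x * A + d < 0 := by rw [lfun_ray, ← hA, ← hd] at hneg; exact hneg
  have hxA : x * A < -d := by linarith
  set s0 : ℝ := d / (- (x * A)) with hs0
  have hs0pos : 0 < s0 := div_pos hdpos (by linarith)
  have hs01 : s0 < 1 := by rw [div_lt_one (by linarith)]; linarith
  set w : ℂ := ((s0 * x : ℝ):ℂ) * ce φ with hw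
  have hwint : w ∈ interior T := by
    have he : w = s0 • ((x:ℂ) * ce φ) := by
      rw [hw, Complex.real_smul, ← mul_assoc, ← Complex.ofReal_mul]
    rw [he]; exact smul_mem_interior hT h0 hX hs0pos hs01
  have hwl : (s0 * x) * A + d = 0 := by
    have hne : -(x * A) ≠ 0 := by linarith
    rw [hs0, div_mul_eq_mul_div, div_mul_eq_mul_div, div_add' _ _ _ hne, div_eq_zero_iff]; left; ring
  have hQP : Q - P ≠ 0 := by
    intro hqp
    have hQeP : Q = P := by rwa [sub_eq_zero] at hqp
    rw [hd, hQeP, det2_self] at hdpos; linarith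
  have hdQPP : det2 (Q - P) P = -d := by
    rw [det2_sub_left, det2_self, det2_swap Q P, hd]; ring
  have hlinw : det2 (Q - P) (w - P) = 0 := by
    rw [det2_sub_right, hdQPP]
    have h2 : det2 (Q - P) w = -d := by
      rw [hw, ← Complex.real_smul, det2_smul_right, ← hA]; linarith
    rw [h2]; ring
  obtain ⟨t, htw⟩ := collinear_of_det2 hQP hlinw
  have hwPQ : w = (1 - t) • P + t • Q := by
    have : w - P = t • Q - t • P := by rw [htw, smul_sub]
    have h3 : w = P + (t • Q - t • P) := by rw [← this]; abel
    rw [h3]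
    rw [sub_smul, one_smul]
    abel
  have hht0 : 0 ≤ t := by
    by_contra hneg'; push_neg at hneg'
    have h1t : (0:ℝ) < 1 - t := by linarith
    have hb : 0 < -t / (1 - t) := div_pos (by linarith) h1t
    have hba : 0 < 1 / (1 - t) := by positivity
    have hsum : 1 / (1 - t) + -t / (1 - t) = 1 := by field_simp; ring
    have hPos : P ∈ openSegment ℝ w Q := by
      refine ⟨1 / (1 - t), -t / (1 - t), hba, hb, hsum, ?_⟩
      rw [hwPQ]
      match_scalars <;> field_simp <;> ring
    exact hPb (hT.openSegment_interior_closure_subset_interior hwint (subset_closure hQ) hPos)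
  have hht1 : t ≤ 1 := by
    by_contra hneg'; push_neg at hneg'
    have htpos : (0:ℝ) < t := by linarith
    have hb : 0 < (t - 1) / t := div_pos (by linarith) htpos
    have hba : 0 < 1 / t := by positivity
    have hsum : 1 / t + (t - 1) / t = 1 := by field_simp; ring
    have hPos : Q ∈ openSegment ℝ w P := by
      refine ⟨1 / t, (t - 1) / t, hba, hb, hsum, ?_⟩
      rw [hwPQ]
      match_scalars <;> field_simp <;> ring
    exact hQb (hT.openSegment_interior_closure_subset_interior hwint (subset_closure hP) hPos)
  -- sign analysis
  have hPw : det2 P w = t * d := by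
    rw [hwPQ, det2_add_right, det2_smul_right, det2_smul_right, det2_self, hd]; ring
  have hPw' : det2 P w = p * (s0 * x) * Real.sin (φ - α) := by
    rw [hw, hPdef, det2_formula]
  have hsin1 : 0 ≤ Real.sin (φ - α) := by
    nlinarith [mul_nonneg hht0 hdpos.le, mul_pos hp (mul_pos hs0pos hx)]
  have hwQ : det2 w Q = (1 - t) * d := by
    rw [hwPQ, det2_add_left, det2_smul_left, det2_smul_left, det2_self, hd]; ring
  have hwQ' : det2 w Q = (s0 * x) * q * Real.sin (β - φ) := by
    rw [hw, hQdef, det2_formula]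
  have hsin2 : 0 ≤ Real.sin (β - φ) := by
    nlinarith [mul_nonneg (show (0:ℝ) ≤ 1 - t by linarith) hdpos.le,
      mul_pos (mul_pos hs0pos hx) hq]
  -- pin down the angle
  have hkey : φ = β ∨ φ = α + 2*π := by
    rcases eq_or_lt_of_le hφ1 with h|hβφ
    · exact Or.inl h.symm
    · have h1 : π ≤ φ - β := by
        by_contra hh; push_neg at hh
        have hpos2 : 0 < Real.sin (φ - β) := sin_pos_of_pos_of_lt_pi (by linarith) hh
        have : Real.sin (β - φ) = - Real.sin (φ - β) := by rw [← Real.sin_neg]; ring_nf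
        rw [this] at hsin2; linarith
      right
      by_contra hh
      have h2 : φ - α < 2*π := by
        rcases lt_or_eq_of_le (show φ ≤ α + 2*π from hφ2) with h'|h'
        · linarith
        · exact absurd h' hh
      have h3 : Real.sin (φ - α) < 0 := by
        have hpos3 : 0 < Real.sin ((φ - α) - π) :=
          sin_pos_of_pos_of_lt_pi (by linarith) (by linarith)
        rw [Real.sin_sub_pi] at hpos3; linarith
      linarith
  rcases hkey with hcase | hcase
  · subst hcase
    have hqA : q * A = -d := by
      rw [hA, ← det2_smul_right]
      have h5 : (q:ℝ) • ce φ = Q := by rw [hQdef, Complex.real_smul]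
      rw [h5, det2_sub_left, det2_self, ← hd]; ring
    rcases le_or_gt x q with hle|hlt
    · have hAneg : A < 0 := by
        by_contra hA0; push_neg at hA0
        nlinarith [mul_nonneg hq.le hA0]
      have h7 : q * A ≤ x * A := mul_le_mul_of_nonpos_right hle hAneg.le
      linarith
    · have hQe : Q = ((q/x):ℝ) • ((x:ℂ) * ce φ) := by
        have hμ : (q/x) * x = q := by field_simp
        rw [hQdef, Complex.real_smul, ← mul_assoc, ← Complex.ofReal_mul, hμ]
      exact hQb (hQe ▸ smul_mem_interior hT h0 hX (div_pos hq hx)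
        (by rw [div_lt_one hx]; exact hlt))
  · have hce : ce φ = ce α := by rw [hcase, ce_per]
    have hpA : p * A = -d := by
      rw [hA, ← det2_smul_right]
      have h5 : (p:ℝ) • ce φ = P := by rw [hce, hPdef, Complex.real_smul]
      rw [h5, hdQPP]
    rcases le_or_gt x p with hle|hlt
    · have hAneg : A < 0 := by
        by_contra hA0; push_neg at hA0
        nlinarith [mul_nonneg hp.le hA0]
      have h7 : p * A ≤ x * A := mul_le_mul_of_nonpos_right hle hAneg.le
      linarith
    · have hPe : P = ((p/x):ℝ) • ((x:ℂ) * ce φ) := by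
        have hμ : (p/x) * x = p := by field_simp
        rw [hPdef, ← hce, Complex.real_smul, ← mul_assoc, ← Complex.ofReal_mul, hμ]
      exact hPb (hPe ▸ smul_mem_interior hT h0 hX (div_pos hp hx)
        (by rw [div_lt_one hx]; exact hlt))

def detL (z : ℂ) : ℂ →ₗ[ℝ] ℝ where
  toFun w := z.re * w.im - z.im * w.re
  map_add' w₁ w₂ := by simp [Complex.add_re, Complex.add_im]; ring
  map_smul' r w := by simp [Complex.smul_re, Complex.smul_im]; ring

lemma radial_unique (hT : Convex ℝ T) (h0 : (0:ℂ) ∈ interior T) {X Y : ℂ}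
    (hXb : X ∉ interior T) (hY : Y ∈ T) (hYb : Y ∉ interior T) (hX : X ∈ T)
    {t : ℝ} (ht : 0 < t) (hXY : X = t • Y) : X = Y := by
  rcases lt_trichotomy t 1 with h|h|h
  · exact absurd (hXY ▸ smul_mem_interior hT h0 hY ht h) hXb
  · rw [hXY, h, one_smul]
  · exfalso
    have hY' : Y = t⁻¹ • X := by rw [hXY, smul_smul, inv_mul_cancel₀ (by positivity), one_smul]
    have : t⁻¹ • X ∈ interior T := smul_mem_interior hT h0 hX (by positivity)
      (by rw [inv_lt_one₀ (by positivity)]; exact h)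
    exact hYb (hY' ▸ this)

lemma face_lemma {s : Set ℂ} {l : ℂ →ₗ[ℝ] ℝ} {cst : ℝ} (hs : ∀ z ∈ s, l z ≤ cst)
    {x : ℂ} (hx : x ∈ convexHull ℝ s) (hxc : l x = cst) :
    x ∈ convexHull ℝ (s ∩ {z | l z = cst}) := by
  rw [convexHull_eq] at hx
  obtain ⟨ι, t, w, z, hw0, hw1, hz, hcm⟩ := hx
  have hlx : ∑ i ∈ t, w i * l (z i) = cst := by
    have h1 : l (t.centerMass w z) = cst := by rw [hcm]; exact hxc
    rw [Finset.centerMass, hw1, inv_one, one_smul, map_sum] at h1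
    simpa only [_root_.map_smul, smul_eq_mul] using h1
  have hzero : ∀ i ∈ t, w i * (cst - l (z i)) = 0 := by
    rw [← Finset.sum_eq_zero_iff_of_nonneg
      (fun i hi => mul_nonneg (hw0 i hi) (by linarith [hs (z i) (hz i hi)]))]
    have : ∑ i ∈ t, w i * (cst - l (z i)) = cst * (∑ i ∈ t, w i) - ∑ i ∈ t, w i * l (z i) := by
      rw [Finset.mul_sum, ← Finset.sum_sub_distrib]; congr 1; ext i; ring
    rw [this, hw1, hlx]; ring
  have hcm' : (t.filter (fun i => w i ≠ 0)).centerMass w z = x := by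
    rw [Finset.centerMass_filter_ne_zero]; exact hcm
  rw [← hcm']
  apply Finset.centerMass_mem_convexHull
  · intro i hi; exact hw0 i (Finset.mem_filter.mp hi).1
  · have : ∑ i ∈ t.filter (fun i => w i ≠ 0), w i = 1 := by
      rw [Finset.sum_filter_ne_zero]; exact hw1
    rw [this]; norm_num
  · intro i hi
    obtain ⟨hit, hwi⟩ := Finset.mem_filter.mp hi
    refine ⟨hz i hit, ?_⟩
    have := hzero i hit
    rcases mul_eq_zero.mp this with h|h
    · exact absurd h hwi
    · show l (z i) = cst; linarith

lemma ray_scale {x y : ℝ} (hy : y ≠ 0) (φ : ℝ) :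
    (x:ℂ) * ce φ = ((x / y : ℝ)) • ((y:ℂ) * ce φ) := by
  have hμ : (x/y) * y = x := by field_simp
  rw [Complex.real_smul, ← mul_assoc, ← Complex.ofReal_mul, hμ]


lemma det2_ce_left (x α φ : ℝ) : det2 (ce α) ((x:ℂ) * ce φ) = x * Real.sin (φ - α) := by
  have := det2_formula 1 x α φ; simpa using this

lemma planar {Z : ℝ → ℂ} {r θ : ℝ → ℝ}
    (hr : ∀ lam ∈ Icc (0:ℝ) 1, 0 < r lam)
    (hZ : ∀ lam ∈ Icc (0:ℝ) 1, Z lam = ((r lam : ℝ):ℂ) * ce (θ lam))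
    (hmono : MonotoneOn θ (Icc 0 1)) (hvar : θ 1 - θ 0 ≤ 2*π)
    (h0 : (0:ℂ) ∈ interior (convexHull ℝ (Z '' Icc 0 1)))
    (hbd : ∀ lam ∈ Icc (0:ℝ) 1, Z lam ∉ interior (convexHull ℝ (Z '' Icc 0 1)))
    {a b : ℝ} (ha : 0 ≤ a) (hab : a < b) (hb : b ≤ 1) :
    convexHull ℝ (Z '' Icc a b) ∩ convexHull ℝ (Z '' (Icc b 1 ∪ Icc 0 a)) ⊆
      segment ℝ (Z a) (Z b) := by
  set T : Set ℂ := convexHull ℝ (Z '' Icc 0 1) with hTdef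
  have hT : Convex ℝ T := convex_convexHull ℝ _
  have haI : a ∈ Icc (0:ℝ) 1 := ⟨ha, by linarith⟩
  have hbI : b ∈ Icc (0:ℝ) 1 := ⟨by linarith, hb⟩
  have hsub1 : Icc a b ⊆ Icc (0:ℝ) 1 := fun t ht => ⟨by linarith [ht.1], by linarith [ht.2]⟩
  have hsub2 : (Icc b 1 ∪ Icc 0 a : Set ℝ) ⊆ Icc (0:ℝ) 1 := by
    rintro t (ht|ht)
    · exact ⟨by linarith [ht.1], ht.2⟩
    · exact ⟨ht.1, by linarith [ht.2]⟩
  have hZT : ∀ lam ∈ Icc (0:ℝ) 1, Z lam ∈ T := fun lam h =>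
    subset_convexHull ℝ _ (mem_image_of_mem Z h)
  have h0I : (0:ℝ) ∈ Icc (0:ℝ) 1 := left_mem_Icc.mpr zero_le_one
  have h1I : (1:ℝ) ∈ Icc (0:ℝ) 1 := right_mem_Icc.mpr zero_le_one
  have hθa0 : θ 0 ≤ θ a := hmono h0I haI ha
  have hθb1 : θ b ≤ θ 1 := hmono hbI h1I hb
  have hαβ : θ a ≤ θ b := hmono haI hbI hab.le
  rintro x ⟨hx1, hx2⟩
  rcases eq_or_lt_of_le hαβ with hdeg | hαβs
  · -- degenerate: θ a = θ b, the arc Z[a,b] is a single point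
    have harc : Z '' Icc a b ⊆ {Z a} := by
      rintro _ ⟨lam, hlam, rfl⟩
      have hlamI := hsub1 hlam
      have h1 : θ lam = θ a :=
        le_antisymm (hdeg ▸ hmono hlamI hbI hlam.2) (hmono haI hlamI hlam.1)
      have he : Z lam = ((r lam / r a : ℝ)) • Z a := by
        rw [hZ lam hlamI, hZ a haI, h1, ← ray_scale (hr a haI).ne']
      have := radial_unique hT h0 (hbd lam hlamI) (hZT a haI) (hbd a haI) (hZT lam hlamI)
        (div_pos (hr lam hlamI) (hr a haI)) he
      simpa using this
    have hx1' : x ∈ ({Z a} : Set ℂ) := by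
      have := convexHull_mono harc hx1
      rwa [convexHull_singleton] at this
    rw [mem_singleton_iff] at hx1'
    rw [hx1']; exact left_mem_segment ℝ _ _
  rcases eq_or_lt_of_le (show θ b ≤ θ a + 2*π by linarith) with hdeg2 | hlt2π
  · -- degenerate: θ b = θ a + 2π, the complementary arc is a single point
    have hθ0 : θ 0 = θ a := by linarith
    have hθ1 : θ 1 = θ b := by linarith
    have hZba : Z b = ((r b / r a : ℝ)) • Z a := by
      rw [hZ b hbI, hZ a haI, hdeg2, ce_per, ← ray_scale (hr a haI).ne']
    have hZbZa : Z b = Z a := radial_unique hT h0 (hbd b hbI) (hZT a haI) (hbd a haI)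
      (hZT b hbI) (div_pos (hr b hbI) (hr a haI)) hZba
    have harc : Z '' (Icc b 1 ∪ Icc 0 a) ⊆ {Z a} := by
      rintro _ ⟨lam, hlam, rfl⟩
      have hlamI := hsub2 hlam
      have he : Z lam = ((r lam / r a : ℝ)) • Z a := by
        rcases hlam with h'|h'
        · have h1 : θ lam = θ b :=
            le_antisymm (hθ1 ▸ hmono hlamI h1I h'.2) (hmono hbI hlamI h'.1)
          rw [hZ lam hlamI, hZ a haI, h1, hdeg2, ce_per, ← ray_scale (hr a haI).ne']
        · have h1 : θ lam = θ a :=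
            le_antisymm (hmono hlamI haI h'.2) (hθ0 ▸ hmono h0I hlamI h'.1)
          rw [hZ lam hlamI, hZ a haI, h1, ← ray_scale (hr a haI).ne']
      have := radial_unique hT h0 (hbd lam hlamI) (hZT a haI) (hbd a haI) (hZT lam hlamI)
        (div_pos (hr lam hlamI) (hr a haI)) he
      simpa using this
    have hx2' : x ∈ ({Z a} : Set ℂ) := by
      have := convexHull_mono harc hx2
      rwa [convexHull_singleton] at this
    rw [mem_singleton_iff] at hx2'
    rw [hx2']; exact left_mem_segment ℝ _ _
  -- nondegenerate: θ a < θ b < θ a + 2π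
  have hpa := hr a haI
  have hqb := hr b hbI
  have hPZ : Z a = ((r a : ℝ):ℂ) * ce (θ a) := hZ a haI
  have hQZ : Z b = ((r b : ℝ):ℂ) * ce (θ b) := hZ b hbI
  have hPT : ((r a : ℝ):ℂ) * ce (θ a) ∈ T := hPZ ▸ hZT a haI
  have hQT : ((r b : ℝ):ℂ) * ce (θ b) ∈ T := hQZ ▸ hZT b hbI
  have hPb : ((r a : ℝ):ℂ) * ce (θ a) ∉ interior T := hPZ ▸ hbd a haI
  have hQb : ((r b : ℝ):ℂ) * ce (θ b) ∉ interior T := hQZ ▸ hbd b hbI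
  have hθup : ∀ lam ∈ Icc b 1, θ b ≤ θ lam ∧ θ lam ≤ θ a + 2*π := by
    intro lam h'
    have hlamI := hsub2 (Or.inl h')
    exact ⟨hmono hbI hlamI h'.1, by linarith [hmono hlamI h1I h'.2]⟩
  have hθdn : ∀ lam ∈ Icc 0 a, θ b ≤ θ lam + 2*π ∧ θ lam + 2*π ≤ θ a + 2*π := by
    intro lam h'
    have hlamI := hsub2 (Or.inr h')
    exact ⟨by linarith [hmono h0I hlamI h'.1], by linarith [hmono hlamI haI h'.2]⟩
  have hθin : ∀ lam ∈ Icc a b, θ a ≤ θ lam ∧ θ lam ≤ θ b := by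
    intro lam h'
    have hlamI := hsub1 h'
    exact ⟨hmono haI hlamI h'.1, hmono hlamI hbI h'.2⟩
  rcases lt_trichotomy (θ b) (θ a + π) with hpi | hpi | hpi
  · -- short chord case: apply G1/G2 with P = Z a, Q = Z b
    set Pc : ℂ := ((r a : ℝ):ℂ) * ce (θ a) with hPc
    set Qc : ℂ := ((r b : ℝ):ℂ) * ce (θ b) with hQc
    set l : ℂ →ₗ[ℝ] ℝ := detL (Qc - Pc) with hl
    set cst : ℝ := - det2 Pc Qc with hcst
    have hlf : ∀ z : ℂ, lfun Pc Qc z = l z - cst := fun z => by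
      show det2 (Qc - Pc) z + det2 Pc Qc = (Qc - Pc).re * z.im - (Qc - Pc).im * z.re - cst
      rw [hcst, det2]; ring
    have h1 : ∀ z ∈ Z '' Icc a b, l z ≤ cst := by
      rintro _ ⟨lam, hlam, rfl⟩
      have hlamI := hsub1 hlam
      have hG := (G1 hT h0 hpa hqb hαβs hpi hPT hQT (hr lam hlamI)
        (hθin lam hlam).1 (hθin lam hlam).2 (hZ lam hlamI ▸ hZT lam hlamI)
        (hZ lam hlamI ▸ hbd lam hlamI)).1
      rw [← hZ lam hlamI, hlf] at hG
      linarith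
    have h2 : ∀ z ∈ Z '' (Icc b 1 ∪ Icc 0 a), cst ≤ l z := by
      rintro _ ⟨lam, hlam, rfl⟩
      rcases hlam with h'|h'
      · have hlamI := hsub2 (Or.inl h')
        have hG := G2 hT h0 hpa hqb hαβs hpi hPT hQT hPb hQb (hr lam hlamI)
          (hθup lam h').1 (hθup lam h').2 (hZ lam hlamI ▸ hZT lam hlamI)
        rw [← hZ lam hlamI, hlf] at hG
        linarith
      · have hlamI := hsub2 (Or.inr h')
        have hZrw : Z lam = ((r lam : ℝ):ℂ) * ce (θ lam + 2*π) := by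
          rw [hZ lam hlamI, ce_per]
        have hG := G2 hT h0 hpa hqb hαβs hpi hPT hQT hPb hQb (hr lam hlamI)
          (hθdn lam h').1 (hθdn lam h').2 (hZrw ▸ hZT lam hlamI)
        rw [← hZrw, hlf] at hG
        linarith
    have hx1' : l x ≤ cst :=
      convexHull_min h1 (convex_halfSpace_le l.isLinear cst) hx1
    have hx2' : cst ≤ l x :=
      convexHull_min h2 (convex_halfSpace_ge l.isLinear cst) hx2
    have hxeq : l x = cst := le_antisymm hx1' hx2'
    have hface := face_lemma h1 hx1 hxeq
    have hseg : Z '' Icc a b ∩ {z | l z = cst} ⊆ segment ℝ Pc Qc := by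
      rintro _ ⟨⟨lam, hlam, rfl⟩, hzl⟩
      have hlamI := hsub1 hlam
      have hG := (G1 hT h0 hpa hqb hαβs hpi hPT hQT (hr lam hlamI)
        (hθin lam hlam).1 (hθin lam hlam).2 (hZ lam hlamI ▸ hZT lam hlamI)
        (hZ lam hlamI ▸ hbd lam hlamI)).2
      have h0l : lfun Pc Qc (((r lam : ℝ):ℂ) * ce (θ lam)) = 0 := by
        rw [← hZ lam hlamI, hlf]
        rw [mem_setOf_eq] at hzl
        linarith [hzl]
      have := hG h0l
      rwa [← hZ lam hlamI] at this
    have : x ∈ segment ℝ Pc Qc :=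
      convexHull_min hseg (convex_segment _ _) hface
    rwa [hPZ, hQZ]
  · -- antipodal case: θ b = θ a + π
    set m : ℂ →ₗ[ℝ] ℝ := detL (ce (θ a)) with hm
    have hmz : ∀ (x₀ φ₀ : ℝ), m (((x₀:ℝ):ℂ) * ce φ₀) = x₀ * Real.sin (φ₀ - θ a) :=
      fun x₀ φ₀ => det2_ce_left x₀ (θ a) φ₀
    have h1 : ∀ z ∈ Z '' Icc a b, (-m) z ≤ 0 := by
      rintro _ ⟨lam, hlam, rfl⟩
      have hlamI := hsub1 hlam
      rw [hZ lam hlamI, LinearMap.neg_apply, hmz, neg_nonpos]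
      have := hθin lam hlam
      exact mul_nonneg (hr lam hlamI).le
        (sin_nonneg_of_nonneg_of_le_pi (by linarith [this.1]) (by linarith [this.2]))
    have h2 : ∀ z ∈ Z '' (Icc b 1 ∪ Icc 0 a), 0 ≤ (-m) z := by
      rintro _ ⟨lam, hlam, rfl⟩
      rcases hlam with h'|h'
      · have hlamI := hsub2 (Or.inl h')
        rw [hZ lam hlamI, LinearMap.neg_apply, hmz, neg_nonneg]
        have hbnd := hθup lam h'
        have hs : Real.sin (θ lam - θ a) ≤ 0 := by
          have hpos3 : 0 ≤ Real.sin ((θ lam - θ a) - π) :=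
            sin_nonneg_of_nonneg_of_le_pi (by linarith [hbnd.1]) (by linarith [hbnd.2])
          rw [Real.sin_sub_pi] at hpos3; linarith
        exact mul_nonpos_of_nonneg_of_nonpos (hr lam hlamI).le hs
      · have hlamI := hsub2 (Or.inr h')
        rw [hZ lam hlamI, LinearMap.neg_apply, hmz, neg_nonneg]
        have hbnd := hθdn lam h'
        have hs : Real.sin (θ lam - θ a) ≤ 0 := by
          have h4 : 0 ≤ Real.sin (-(θ lam - θ a)) :=
            sin_nonneg_of_nonneg_of_le_pi (by linarith [hmono hlamI haI h'.2])
              (by linarith [hbnd.1])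
          rw [Real.sin_neg] at h4; linarith
        exact mul_nonpos_of_nonneg_of_nonpos (hr lam hlamI).le hs
    have hx1' : (-m) x ≤ 0 :=
      convexHull_min h1 (convex_halfSpace_le (-m).isLinear 0) hx1
    have hx2' : 0 ≤ (-m) x :=
      convexHull_min h2 (convex_halfSpace_ge (-m).isLinear 0) hx2
    have hxeq : (-m) x = 0 := le_antisymm hx1' hx2'
    have hface := face_lemma h1 hx1 hxeq
    have hseg : Z '' Icc a b ∩ {z | (-m) z = 0} ⊆ {Z a, Z b} := by
      rintro _ ⟨⟨lam, hlam, rfl⟩, hzl⟩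
      have hlamI := hsub1 hlam
      rw [mem_setOf_eq, hZ lam hlamI, LinearMap.neg_apply, hmz, neg_eq_zero] at hzl
      have hsin0 : Real.sin (θ lam - θ a) = 0 := by
        rcases mul_eq_zero.mp hzl with h'|h'
        · exact absurd h' (hr lam hlamI).ne'
        · exact h'
      have hbnd := hθin lam hlam
      rcases eq_or_lt_of_le (show θ lam ≤ θ b from hbnd.2) with hcase|hcase
      · right
        have he : Z lam = ((r lam / r b : ℝ)) • Z b := by
          rw [hZ lam hlamI, hQZ, hcase, ← ray_scale hqb.ne']
        have := radial_unique hT h0 (hbd lam hlamI) (hZT b hbI) (hbd b hbI) (hZT lam hlamI)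
          (div_pos (hr lam hlamI) hqb) he
        simpa using this
      · left
        have hla : θ lam = θ a := by
          have := (Real.sin_eq_zero_iff_of_lt_of_lt (x := θ lam - θ a)
            (by linarith [hbnd.1]) (by linarith [hpi])).mp hsin0
          linarith
        have he : Z lam = ((r lam / r a : ℝ)) • Z a := by
          rw [hZ lam hlamI, hPZ, hla, ← ray_scale hpa.ne']
        have := radial_unique hT h0 (hbd lam hlamI) (hZT a haI) (hbd a haI) (hZT lam hlamI)
          (div_pos (hr lam hlamI) hpa) he
        simpa using this
    have : x ∈ convexHull ℝ ({Z a, Z b} : Set ℂ) :=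
      convexHull_mono hseg hface
    rwa [convexHull_pair] at this
  · -- long chord case: apply G1/G2 with P = Z b, Q = Z a (angle θ a + 2π)
    set Pc : ℂ := ((r b : ℝ):ℂ) * ce (θ b) with hPc
    set Qc : ℂ := ((r a : ℝ):ℂ) * ce (θ a + 2*π) with hQc
    have hQcZ : Z a = Qc := by rw [hZ a haI, hQc, ce_per]
    have hQT' : Qc ∈ T := hQcZ ▸ hZT a haI
    have hQb' : Qc ∉ interior T := hQcZ ▸ hbd a haI
    have hαβ' : θ b < θ a + 2*π := hlt2π
    have hpi' : θ a + 2*π < θ b + π := by linarith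
    set l : ℂ →ₗ[ℝ] ℝ := detL (Qc - Pc) with hl
    set cst : ℝ := - det2 Pc Qc with hcst
    have hlf : ∀ z : ℂ, lfun Pc Qc z = l z - cst := fun z => by
      show det2 (Qc - Pc) z + det2 Pc Qc = (Qc - Pc).re * z.im - (Qc - Pc).im * z.re - cst
      rw [hcst, det2]; ring
    have h1 : ∀ z ∈ Z '' (Icc b 1 ∪ Icc 0 a), l z ≤ cst := by
      rintro _ ⟨lam, hlam, rfl⟩
      rcases hlam with h'|h'
      · have hlamI := hsub2 (Or.inl h')
        have hG := (G1 hT h0 hqb hpa hαβ' hpi' hQT hQT' (hr lam hlamI)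
          (hθup lam h').1 (hθup lam h').2 (hZ lam hlamI ▸ hZT lam hlamI)
          (hZ lam hlamI ▸ hbd lam hlamI)).1
        rw [← hZ lam hlamI, hlf] at hG
        linarith
      · have hlamI := hsub2 (Or.inr h')
        have hZrw : Z lam = ((r lam : ℝ):ℂ) * ce (θ lam + 2*π) := by
          rw [hZ lam hlamI, ce_per]
        have hG := (G1 hT h0 hqb hpa hαβ' hpi' hQT hQT' (hr lam hlamI)
          (hθdn lam h').1 (hθdn lam h').2 (hZrw ▸ hZT lam hlamI)
          (hZrw ▸ hbd lam hlamI)).1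
        rw [← hZrw, hlf] at hG
        linarith
    have h2 : ∀ z ∈ Z '' Icc a b, cst ≤ l z := by
      rintro _ ⟨lam, hlam, rfl⟩
      have hlamI := hsub1 hlam
      have hZrw : Z lam = ((r lam : ℝ):ℂ) * ce (θ lam + 2*π) := by
        rw [hZ lam hlamI, ce_per]
      have hG := G2 hT h0 hqb hpa hαβ' hpi' hQT hQT' hQb hQb' (hr lam hlamI)
        (by linarith [(hθin lam hlam).1]) (by linarith [(hθin lam hlam).2])
        (hZrw ▸ hZT lam hlamI)
      rw [← hZrw, hlf] at hG
      linarith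
    have hx1' : cst ≤ l x :=
      convexHull_min h2 (convex_halfSpace_ge l.isLinear cst) hx1
    have hx2' : l x ≤ cst :=
      convexHull_min h1 (convex_halfSpace_le l.isLinear cst) hx2
    have hxeq : l x = cst := le_antisymm hx2' hx1'
    have hface := face_lemma h1 hx2 hxeq
    have hseg : Z '' (Icc b 1 ∪ Icc 0 a) ∩ {z | l z = cst} ⊆ segment ℝ Pc Qc := by
      rintro _ ⟨⟨lam, hlam, rfl⟩, hzl⟩
      rw [mem_setOf_eq] at hzl
      rcases hlam with h'|h'
      · have hlamI := hsub2 (Or.inl h')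
        have hG := (G1 hT h0 hqb hpa hαβ' hpi' hQT hQT' (hr lam hlamI)
          (hθup lam h').1 (hθup lam h').2 (hZ lam hlamI ▸ hZT lam hlamI)
          (hZ lam hlamI ▸ hbd lam hlamI)).2
        have h0l : lfun Pc Qc (((r lam : ℝ):ℂ) * ce (θ lam)) = 0 := by
          rw [← hZ lam hlamI, hlf]; linarith [hzl]
        have := hG h0l
        rwa [← hZ lam hlamI] at this
      · have hlamI := hsub2 (Or.inr h')
        have hZrw : Z lam = ((r lam : ℝ):ℂ) * ce (θ lam + 2*π) := by
          rw [hZ lam hlamI, ce_per]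
        have hG := (G1 hT h0 hqb hpa hαβ' hpi' hQT hQT' (hr lam hlamI)
          (hθdn lam h').1 (hθdn lam h').2 (hZrw ▸ hZT lam hlamI)
          (hZrw ▸ hbd lam hlamI)).2
        have h0l : lfun Pc Qc (((r lam : ℝ):ℂ) * ce (θ lam + 2*π)) = 0 := by
          rw [← hZrw, hlf]; linarith [hzl]
        have := hG h0l
        rwa [← hZrw] at this
    have hxs : x ∈ segment ℝ Pc Qc :=
      convexHull_min hseg (convex_segment _ _) hface
    rw [hQcZ, hQZ, segment_symm]
    exact hxs

end ConvexBits



lemma ce_eq (θ : ℝ) : ce θ = ((Real.cos θ : ℝ) : ℂ) + ((Real.sin θ : ℝ) : ℂ) * Complex.I := by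
  rw [ce, Complex.exp_mul_I, Complex.ofReal_cos, Complex.ofReal_sin]

lemma inner3 (x y : E3) : (inner ℝ x y : ℝ) = x 0 * y 0 + x 1 * y 1 + x 2 * y 2 := by
  simp [PiLp.inner_apply, Fin.sum_univ_three, RCLike.inner_apply, mul_comm]

def wOne : E3 := (WithLp.equiv 2 (Fin 3 → ℝ)).symm ![1,1,1]

lemma wOne_apply (i : Fin 3) : wOne i = 1 := by
  fin_cases i <;> rfl

lemma inner_wOne (x : E3) : (inner ℝ x wOne : ℝ) = x 0 + x 1 + x 2 := by
  rw [inner3]; simp [wOne_apply]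

lemma convex_planeA : Convex ℝ {x : E3 | x 0 + x 1 + x 2 = 1} := by
  have hlin : IsLinearMap ℝ (fun x : E3 => x 0 + x 1 + x 2) := by
    constructor
    · intro x y; simp [PiLp.add_apply]; ring
    · intro r x; simp [PiLp.smul_apply]; ring
  exact convex_hyperplane hlin 1

lemma inj3 {u v : E3} (hu : ‖u‖ = 1) (hv : ‖v‖ = 1) (huv : (inner ℝ u v : ℝ) = 0)
    (hu0 : u 0 + u 1 + u 2 = 0) (hv0 : v 0 + v 1 + v 2 = 0) {z : E3}
    (hz1 : (inner ℝ u z : ℝ) = 0) (hz2 : (inner ℝ v z : ℝ) = 0) (hz3 : z 0 + z 1 + z 2 = 0) : z = 0 := by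
  have hs3 : (0:ℝ) < Real.sqrt 3 := Real.sqrt_pos.mpr (by norm_num)
  set f : Fin 3 → E3 := ![u, v, (Real.sqrt 3)⁻¹ • wOne] with hf
  have huu : (inner ℝ u u : ℝ) = 1 := by rw [real_inner_self_eq_norm_sq, hu]; norm_num
  have hvv : (inner ℝ v v : ℝ) = 1 := by rw [real_inner_self_eq_norm_sq, hv]; norm_num
  have hvu : (inner ℝ v u : ℝ) = 0 := by rw [real_inner_comm]; exact huv
  have huw : (inner ℝ u wOne : ℝ) = 0 := by rw [inner_wOne]; exact hu0
  have hvw : (inner ℝ v wOne : ℝ) = 0 := by rw [inner_wOne]; exact hv0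
  have hwu : (inner ℝ wOne u : ℝ) = 0 := by rw [real_inner_comm]; exact huw
  have hwv : (inner ℝ wOne v : ℝ) = 0 := by rw [real_inner_comm]; exact hvw
  have hww : (inner ℝ wOne wOne : ℝ) = 3 := by rw [inner_wOne]; simp [wOne_apply]; norm_num
  have hwz : (inner ℝ wOne z : ℝ) = 0 := by rw [real_inner_comm, inner_wOne]; exact hz3
  have hon : Orthonormal ℝ f := by
    rw [orthonormal_iff_ite]
    intro i j
    fin_cases i <;> fin_cases j
    · simpa [hf] using huu
    · simpa [hf] using huv
    · simp [hf, real_inner_smul_right, huw, Fin.sum_univ_three, wOne_apply]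
    · simpa [hf] using hvu
    · simpa [hf] using hvv
    · simp [hf, real_inner_smul_right, hvw, Fin.sum_univ_three, wOne_apply]
    · simp [hf, real_inner_smul_left, hwu, Fin.sum_univ_three, wOne_apply]
    · simp [hf, real_inner_smul_left, hwv, Fin.sum_univ_three, wOne_apply]
    · simp [hf, real_inner_smul_left, real_inner_smul_right, Fin.sum_univ_three, wOne_apply]
      have h3 : Real.sqrt 3 * Real.sqrt 3 = 3 := Real.mul_self_sqrt (by norm_num)
      left
      have hn : ‖wOne‖ = Real.sqrt 3 := by
        rw [← Real.sqrt_sq (norm_nonneg wOne), ← real_inner_self_eq_norm_sq, hww]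
      rw [norm_smul, hn, Real.norm_eq_abs, abs_of_pos (by positivity)]
      exact inv_mul_cancel₀ hs3.ne'
  have hcard : Fintype.card (Fin 3) = Module.finrank ℝ E3 := by
    simp [finrank_euclideanSpace_fin]
  have hspan := hon.linearIndependent.span_eq_top_of_card_eq_finrank hcard
  let B : OrthonormalBasis (Fin 3) ℝ E3 := OrthonormalBasis.mk hon hspan.ge
  have hrep := B.sum_repr' z
  have hBf : ∀ i, B i = f i := fun i => by simp [B, OrthonormalBasis.coe_mk]
  have hzero : ∀ i : Fin 3, (inner ℝ (B i) z : ℝ) = 0 := by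
    intro i
    rw [hBf]
    fin_cases i
    · simpa [hf] using hz1
    · simpa [hf] using hz2
    · simp [hf, real_inner_smul_left, Fin.sum_univ_three, wOne_apply]
      linear_combination hwz
  rw [← hrep]
  apply Finset.sum_eq_zero
  intro i _
  rw [hzero i, zero_smul]

def Lmap (u v : E3) : E3 →ₗ[ℝ] ℂ where
  toFun x := ((inner ℝ u x : ℝ) : ℂ) + ((inner ℝ v x : ℝ) : ℂ) * Complex.I
  map_add' x y := by
    show ((inner ℝ u (x + y) : ℝ) : ℂ) + ((inner ℝ v (x + y) : ℝ) : ℂ) * Complex.I =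
      (((inner ℝ u x : ℝ) : ℂ) + ((inner ℝ v x : ℝ) : ℂ) * Complex.I) +
      (((inner ℝ u y : ℝ) : ℂ) + ((inner ℝ v y : ℝ) : ℂ) * Complex.I)
    rw [inner_add_right, inner_add_right]; push_cast; ring
  map_smul' r x := by
    show ((inner ℝ u (r • x) : ℝ) : ℂ) + ((inner ℝ v (r • x) : ℝ) : ℂ) * Complex.I =
      (RingHom.id ℝ) r • (((inner ℝ u x : ℝ) : ℂ) + ((inner ℝ v x : ℝ) : ℂ) * Complex.I)
    rw [real_inner_smul_right, real_inner_smul_right, RingHom.id_apply, Complex.real_smul]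
    push_cast; ring

def Fmap (c u v : E3) : E3 →ᵃ[ℝ] ℂ where
  toFun x := Lmap u v (x - c)
  linear := Lmap u v
  map_vadd' p w := by
    simp only [vadd_eq_add]
    rw [add_sub_assoc, map_add]

lemma Fmap_apply (c u v : E3) (x : E3) : Fmap c u v x = Lmap u v (x - c) := rfl

lemma Lmap_combo {u v : E3} (hu : ‖u‖ = 1) (hv : ‖v‖ = 1) (huv : (inner ℝ u v : ℝ) = 0)
    (s t : ℝ) : Lmap u v (s • u + t • v) = (s : ℂ) + (t : ℂ) * Complex.I := by
  have huu : (inner ℝ u u : ℝ) = 1 := by rw [real_inner_self_eq_norm_sq, hu]; norm_num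
  have hvv : (inner ℝ v v : ℝ) = 1 := by rw [real_inner_self_eq_norm_sq, hv]; norm_num
  have hvu : (inner ℝ v u : ℝ) = 0 := by rw [real_inner_comm]; exact huv
  show ((inner ℝ u (s • u + t • v) : ℝ) : ℂ) + ((inner ℝ v (s • u + t • v) : ℝ) : ℂ) * Complex.I = _
  rw [inner_add_right, inner_add_right, real_inner_smul_right, real_inner_smul_right,
    real_inner_smul_right, real_inner_smul_right, huu, hvv, huv, hvu]
  push_cast; ring


lemma main_sub (η : ℝ → E3) (hηΔ : ∀ lam ∈ Icc (0:ℝ) 1, η lam ∈ simplex2)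
    (u v : E3) (hu : ‖u‖ = 1) (hv : ‖v‖ = 1) (huv : (inner ℝ u v : ℝ) = 0)
    (hu0 : u 0 + u 1 + u 2 = 0) (hv0 : v 0 + v 1 + v 2 = 0)
    (c : E3) (hc : c ∈ intA (colorTri η))
    (hfront : η '' Icc 0 1 ⊆ frontA (colorTri η))
    (θ : ℝ → ℝ) (hmono : MonotoneOn θ (Icc 0 1)) (hvar : θ 1 - θ 0 ≤ 2*π)
    (heq : ∀ lam ∈ Icc (0:ℝ) 1,
      η lam - c = ‖η lam - c‖ • (Real.cos (θ lam) • u + Real.sin (θ lam) • v))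
    (a b : ℝ) (ha : 0 ≤ a) (hab : a < b) (hb : b ≤ 1) :
    convexHull ℝ (η '' Icc a b) ∩ convexHull ℝ (η '' (Icc b 1 ∪ Icc 0 a)) ⊆
      segment ℝ (η a) (η b) := by
  have hcvxA : Convex ℝ planeA := convex_planeA
  have hplaneT : colorTri η ⊆ planeA := by
    apply convexHull_min _ hcvxA
    rintro _ ⟨lam, hlam, rfl⟩
    exact (hηΔ lam hlam).2
  set F := Fmap c u v with hF
  set Z : ℝ → ℂ := fun lam => F (η lam) with hZdef
  have hcA : c ∈ planeA := hc.1
  have hZf : ∀ lam ∈ Icc (0:ℝ) 1, Z lam = ((‖η lam - c‖ : ℝ) : ℂ) * ce (θ lam) := by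
    intro lam hlam
    have hkey : η lam - c = (‖η lam - c‖ * Real.cos (θ lam)) • u +
        (‖η lam - c‖ * Real.sin (θ lam)) • v := by
      conv_lhs => rw [heq lam hlam]
      rw [smul_add, smul_smul, smul_smul]
    show F (η lam) = _
    rw [hF, Fmap_apply]
    conv_lhs => rw [hkey]
    rw [Lmap_combo hu hv huv, ce_eq]
    push_cast; ring
  have hinj : ∀ x ∈ planeA, ∀ y ∈ planeA, F x = F y → x = y := by
    intro x hx y hy hxy
    have hsub : Lmap u v (x - y) = 0 := by
      have h1 : Lmap u v (x - c) - Lmap u v (y - c) = 0 := by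
        rw [hF] at hxy
        rw [← Fmap_apply c u v, ← Fmap_apply c u v, hxy, sub_self]
      rw [← map_sub, sub_sub_sub_cancel_right] at h1
      exact h1
    have h1 : (inner ℝ u (x - y) : ℝ) = 0 := by
      have := congrArg Complex.re hsub
      simpa [Lmap] using this
    have h2 : (inner ℝ v (x - y) : ℝ) = 0 := by
      have := congrArg Complex.im hsub
      simpa [Lmap] using this
    have h3 : (x - y) 0 + (x - y) 1 + (x - y) 2 = 0 := by
      have hx' : x 0 + x 1 + x 2 = 1 := hx
      have hy' : y 0 + y 1 + y 2 = 1 := hy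
      simp only [PiLp.sub_apply]
      linarith
    exact sub_eq_zero.mp (inj3 hu hv huv hu0 hv0 h1 h2 h3)
  have himg : ∀ s : Set ℝ, F '' (convexHull ℝ (η '' s)) = convexHull ℝ (Z '' s) := by
    intro s
    rw [AffineMap.image_convexHull, Set.image_image]
  have hT'c : F '' colorTri η = convexHull ℝ (Z '' Icc 0 1) := himg (Icc 0 1)
  have h0 : (0:ℂ) ∈ interior (convexHull ℝ (Z '' Icc 0 1)) := by
    obtain ⟨hcp, U, hUo, hcU, hUsub⟩ := hc
    obtain ⟨ε, hε, hball⟩ := Metric.isOpen_iff.mp hUo c hcU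
    have hsubball : Metric.ball (0:ℂ) ε ⊆ convexHull ℝ (Z '' Icc 0 1) := by
      intro ζ hζ
      set x : E3 := c + ζ.re • u + ζ.im • v with hx
      have hxc : x - c = ζ.re • u + ζ.im • v := by rw [hx]; abel
      have hxplane : x ∈ planeA := by
        show x 0 + x 1 + x 2 = 1
        have hcp' : c 0 + c 1 + c 2 = 1 := hcp
        simp only [hx, PiLp.add_apply, PiLp.smul_apply, smul_eq_mul]
        linear_combination hcp' + ζ.re * hu0 + ζ.im * hv0
      have hnorm : ‖x - c‖ = ‖ζ‖ := by
        have h2 : ‖ζ.re • u + ζ.im • v‖^2 = ζ.re^2 + ζ.im^2 := by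
          rw [norm_add_sq_real, norm_smul, norm_smul, hu, hv,
            real_inner_smul_left, real_inner_smul_right, huv]
          simp [Real.norm_eq_abs, sq_abs]
        have h3 : ‖ζ‖ ^ 2 = ζ.re^2 + ζ.im^2 := by
          rw [Complex.sq_norm, Complex.normSq_apply]; ring
        have h4 : ‖x - c‖^2 = ‖ζ‖ ^ 2 := by rw [hxc, h2, h3]
        calc ‖x - c‖ = Real.sqrt (‖x - c‖^2) := (Real.sqrt_sq (norm_nonneg _)).symm
          _ = Real.sqrt (‖ζ‖ ^ 2) := by rw [h4]
          _ = ‖ζ‖ := Real.sqrt_sq (norm_nonneg _)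
      have hxball : x ∈ Metric.ball c ε := by
        rw [Metric.mem_ball, dist_eq_norm, hnorm]
        rwa [Metric.mem_ball, dist_eq_norm, sub_zero] at hζ
      have hxT : x ∈ colorTri η := hUsub ⟨hball hxball, hxplane⟩
      have hFx : F x = ζ := by
        rw [hF, Fmap_apply, hxc, Lmap_combo hu hv huv, Complex.re_add_im]
      rw [← hFx, ← hT'c]
      exact mem_image_of_mem F hxT
    exact interior_maximal hsubball Metric.isOpen_ball (Metric.mem_ball_self hε)
  have hbd : ∀ lam ∈ Icc (0:ℝ) 1, Z lam ∉ interior (convexHull ℝ (Z '' Icc 0 1)) := by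
    intro lam hlam hint
    have hfr := hfront (mem_image_of_mem η hlam)
    apply hfr.2
    refine ⟨(hηΔ lam hlam).2, F ⁻¹' (interior (convexHull ℝ (Z '' Icc 0 1))), ?_, hint, ?_⟩
    · exact (F.continuous_of_finiteDimensional).isOpen_preimage _ isOpen_interior
    · rintro x ⟨hx1, hx2⟩
      have hFxi : F x ∈ F '' colorTri η := by
        rw [hT'c]; exact interior_subset hx1
      obtain ⟨y, hyT, hyx⟩ := hFxi
      have hyA : y ∈ planeA := hplaneT hyT
      exact (hinj y hyA x hx2 hyx) ▸ hyT
  have hr : ∀ lam ∈ Icc (0:ℝ) 1, 0 < ‖η lam - c‖ := by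
    intro lam hlam
    rw [norm_pos_iff, sub_ne_zero]
    intro hlc
    exact (hfront (mem_image_of_mem η hlam)).2 (hlc ▸ hc)
  rintro x ⟨hx1, hx2⟩
  have hZx : F x ∈ segment ℝ (Z a) (Z b) := by
    apply planar hr hZf hmono hvar h0 hbd ha hab hb
    constructor
    · rw [← himg (Icc a b)]; exact mem_image_of_mem F hx1
    · rw [← himg (Icc b 1 ∪ Icc 0 a)]; exact mem_image_of_mem F hx2
  rw [segment_eq_image_lineMap] at hZx
  obtain ⟨t, htI, hte⟩ := hZx
  have hFl : F (AffineMap.lineMap (η a) (η b) t) = F x := by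
    rw [AffineMap.apply_lineMap]
    exact hte
  have haA : η a ∈ planeA := (hηΔ a ⟨ha, by linarith⟩).2
  have hbA : η b ∈ planeA := (hηΔ b ⟨by linarith, hb⟩).2
  have hxA : x ∈ planeA := by
    apply hplaneT
    apply convexHull_mono (image_mono (fun s hs => ?_)) hx1
    exact ⟨by linarith [hs.1], by linarith [hs.2]⟩
  have hlA : AffineMap.lineMap (η a) (η b) t ∈ planeA := by
    have hseg : AffineMap.lineMap (η a) (η b) t ∈ segment ℝ (η a) (η b) := by
      rw [segment_eq_image_lineMap]; exact mem_image_of_mem _ htI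
    exact hcvxA.segment_subset haA hbA hseg
  rw [← hinj _ hlA x hxA hFl, segment_eq_image_lineMap]
  exact mem_image_of_mem _ htI

end SpecAux

/-- if the spectral locus is convex, then for `0 ≤ a < b ≤ 1` the convex hulls of
the two complementary arcs of the locus meet exactly in the chord `[η(a), η(b)]`. -/
theorem hulls_of_complementary_arcs_meet_in_chord
    (η : ℝ → E3) (hηcont : ContinuousOn η (Icc 0 1))
    (hηΔ : ∀ lam ∈ Icc (0:ℝ) 1, η lam ∈ simplex2)
    (u v : E3) (hu : ‖u‖ = 1) (hv : ‖v‖ = 1) (huv : (inner ℝ u v : ℝ) = 0)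
    (hu0 : u 0 + u 1 + u 2 = 0) (hv0 : v 0 + v 1 + v 2 = 0)
    (hTint : (intA (colorTri η)).Nonempty)
    (hconv : IsConvexLocus η u v)
    (a b : ℝ) (ha : 0 ≤ a) (hab : a < b) (hb : b ≤ 1) :
    convexHull ℝ (η '' Icc a b) ∩ convexHull ℝ (η '' (Icc b 1 ∪ Icc 0 a)) =
      segment ℝ (η a) (η b) := by
  obtain ⟨c, hc⟩ := hTint
  obtain ⟨hfront, hang⟩ := hconv
  obtain ⟨θ, hθcont, hθmono, hθvar, hθeq⟩ := hang c hc
  apply Set.Subset.antisymm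
  · rcases hθmono with hm | hm
    · exact SpecAux.main_sub η hηΔ u v hu hv huv hu0 hv0 c hc hfront θ hm
        (le_trans (le_abs_self _) hθvar) hθeq a b ha hab hb
    · have hθeq' : ∀ lam ∈ Icc (0:ℝ) 1, η lam - c =
          ‖η lam - c‖ • (Real.cos (-θ lam) • u + Real.sin (-θ lam) • (-v)) := by
        intro lam hlam
        rw [Real.cos_neg, Real.sin_neg, neg_smul_neg]
        exact hθeq lam hlam
      have hm' : MonotoneOn (fun lam => -θ lam) (Icc 0 1) :=
        fun x hx y hy hxy => neg_le_neg (hm hx hy hxy)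
      have hv' : ‖-v‖ = 1 := by rwa [norm_neg]
      have huv' : (inner ℝ u (-v) : ℝ) = 0 := by rw [inner_neg_right, huv]; ring
      have hv0' : (-v) 0 + (-v) 1 + (-v) 2 = 0 := by
        simp only [PiLp.neg_apply]
        linarith
      have hvar' : (fun lam => -θ lam) 1 - (fun lam => -θ lam) 0 ≤ 2*π := by
        simp only
        calc -θ 1 - -θ 0 = θ 0 - θ 1 := by ring
          _ ≤ |θ 0 - θ 1| := le_abs_self _
          _ = |θ 1 - θ 0| := abs_sub_comm _ _
          _ ≤ 2*π := hθvar
      exact SpecAux.main_sub η hηΔ u (-v) hu hv' huv' hu0 hv0' c hc hfront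
        (fun lam => -θ lam) hm' hvar' hθeq' a b ha hab hb
  · have hbase1a : η a ∈ η '' Icc a b := mem_image_of_mem _ (left_mem_Icc.mpr hab.le)
    have hbase1b : η b ∈ η '' Icc a b := mem_image_of_mem _ (right_mem_Icc.mpr hab.le)
    have hbase2a : η a ∈ η '' (Icc b 1 ∪ Icc 0 a) :=
      mem_image_of_mem _ (Or.inr (right_mem_Icc.mpr ha))
    have hbase2b : η b ∈ η '' (Icc b 1 ∪ Icc 0 a) :=
      mem_image_of_mem _ (Or.inl (left_mem_Icc.mpr hb))
    intro z hz
    exact ⟨(convex_convexHull ℝ _).segment_subset (subset_convexHull ℝ _ hbase1a)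
        (subset_convexHull ℝ _ hbase1b) hz,
      (convex_convexHull ℝ _).segment_subset (subset_convexHull ℝ _ hbase2a)
        (subset_convexHull ℝ _ hbase2b) hz⟩
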